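/- Suppose 𝒜 satisfies the RIP with constant δ ∈ (0,1). Then for all u ∈ ℝ^{n1} and v ∈ ℝ^{n2} one has ‖(𝒪*𝒪 − 𝒫_𝒪)(uvᵀ)‖ ≤ δ·‖uvᵀ‖_F, where ‖·‖ on the left denotes the spectral (operator) norm of the matrix and 𝒫_𝒪 : ℝ^{n1×n2} → ℝ^{n1×n2} is the orthogonal projection 𝒫_𝒪(Z) = u_⋆u_⋆ᵀ Z (I − v_⋆v_⋆ᵀ) + (I − u_⋆u_⋆ᵀ) Z v_⋆v_⋆ᵀ. -/

import Mathlib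

open MeasureTheory ProbabilityTheory Matrix Finset
open scoped BigOperators ENNReal NNReal RealInnerProductSpace

noncomputable section

namespace ALSPaper

/-- View a plain vector as an element of Euclidean space. -/
def toE {n : ℕ} (x : Fin n → ℝ) : EuclideanSpace ℝ (Fin n) :=
  (WithLp.equiv 2 (Fin n → ℝ)).symm x

/-- View an element of Euclidean space as a plain vector. -/
def ofE {n : ℕ} (x : EuclideanSpace ℝ (Fin n)) : Fin n → ℝ :=
  WithLp.equiv 2 (Fin n → ℝ) x

/-- The first standard basis vector. -/
def e1 (n : ℕ) : EuclideanSpace ℝ (Fin n) :=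
  toE fun i => if (i : ℕ) = 0 then 1 else 0

/-- Frobenius inner product. -/
def frobInner {n1 n2 : ℕ} (A B : Matrix (Fin n1) (Fin n2) ℝ) : ℝ :=
  ∑ i, ∑ j, A i j * B i j

/-- Frobenius norm. -/
def frobNorm {n1 n2 : ℕ} (A : Matrix (Fin n1) (Fin n2) ℝ) : ℝ :=
  Real.sqrt (frobInner A A)

/-- The measurement operator. -/
def calA {n1 n2 m : ℕ} (A : Fin m → Matrix (Fin n1) (Fin n2) ℝ)
    (X : Matrix (Fin n1) (Fin n2) ℝ) : EuclideanSpace ℝ (Fin m) :=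
  toE fun i => (Real.sqrt m)⁻¹ * frobInner (A i) X

/-- The adjoint of the measurement operator. -/
def calAdj {n1 n2 m : ℕ} (A : Fin m → Matrix (Fin n1) (Fin n2) ℝ)
    (w : EuclideanSpace ℝ (Fin m)) : Matrix (Fin n1) (Fin n2) ℝ :=
  ∑ i, ((Real.sqrt m)⁻¹ * ofE w i) • A i

/-- The restricted isometry property (RIP) with constant `δ` (for rank ≤ 4). -/
def HasRIP {n1 n2 m : ℕ} (A : Fin m → Matrix (Fin n1) (Fin n2) ℝ) (δ : ℝ) : Prop :=
  ∀ Z : Matrix (Fin n1) (Fin n2) ℝ, Z.rank ≤ 4 →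
    (1 - δ) * frobNorm Z ^ 2 ≤ ‖calA A Z‖ ^ 2 ∧ ‖calA A Z‖ ^ 2 ≤ (1 + δ) * frobNorm Z ^ 2

/-- Component of `v` parallel to the first standard basis vector. -/
def par {n : ℕ} (v : EuclideanSpace ℝ (Fin n)) : EuclideanSpace ℝ (Fin n) :=
  ⟪e1 n, v⟫ • e1 n

/-- Component of `v` orthogonal to the first standard basis vector. -/
def perp {n : ℕ} (v : EuclideanSpace ℝ (Fin n)) : EuclideanSpace ℝ (Fin n) :=
  v - par v

/-- The "diagonal block" part of a measurement matrix. -/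
def Dmat {n1 n2 : ℕ} (A : Matrix (Fin n1) (Fin n2) ℝ) : Matrix (Fin n1) (Fin n2) ℝ :=
  vecMulVec (ofE (e1 n1)) (ofE (e1 n1)) * A * vecMulVec (ofE (e1 n2)) (ofE (e1 n2))
    + (1 - vecMulVec (ofE (e1 n1)) (ofE (e1 n1))) * A *
        (1 - vecMulVec (ofE (e1 n2)) (ofE (e1 n2)))

/-- The "off-diagonal block" part of a measurement matrix. -/
def Omat {n1 n2 : ℕ} (A : Matrix (Fin n1) (Fin n2) ℝ) : Matrix (Fin n1) (Fin n2) ℝ :=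
  vecMulVec (ofE (e1 n1)) (ofE (e1 n1)) * A * (1 - vecMulVec (ofE (e1 n2)) (ofE (e1 n2)))
    + (1 - vecMulVec (ofE (e1 n1)) (ofE (e1 n1))) * A * vecMulVec (ofE (e1 n2)) (ofE (e1 n2))

/-- The (1,1) entry of a matrix. -/
def ent11 {n1 n2 : ℕ} (A : Matrix (Fin n1) (Fin n2) ℝ) : ℝ :=
  frobInner (vecMulVec (ofE (e1 n1)) (ofE (e1 n2))) A

/-- Spectral (operator) norm of a matrix. -/
def specNorm {n1 n2 : ℕ} (M : Matrix (Fin n1) (Fin n2) ℝ) : ℝ :=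
  ‖LinearMap.toContinuousLinearMap (Matrix.toEuclideanLin M)‖

/-- The normal equation for the least-squares update. -/
def NormalEq {n1 n2 m : ℕ} (A : Fin m → Matrix (Fin n1) (Fin n2) ℝ)
    (u : EuclideanSpace ℝ (Fin n1)) (v : EuclideanSpace ℝ (Fin n2)) : Prop :=
  u = ⟪v, e1 n2⟫ • e1 n1 +
    toE (((vecMulVec (ofE u) (ofE v) - vecMulVec (ofE (e1 n1)) (ofE (e1 n2))) -
      calAdj A (calA A (vecMulVec (ofE u) (ofE v) - vecMulVec (ofE (e1 n1)) (ofE (e1 n2)))))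
        *ᵥ ofE v)

/-- sin of the angle between two vectors. -/
def sinAngle {n : ℕ} (a b : EuclideanSpace ℝ (Fin n)) : ℝ :=
  Real.sqrt (1 - ⟪a, b⟫ ^ 2 / (‖a‖ ^ 2 * ‖b‖ ^ 2))

/-- `c_t` sequence. -/
def cseq (n2 t : ℕ) : ℝ := (1 + 1 / Real.log n2) ^ t - 1

/-- ALS iterates. -/
def IsALS {n1 n2 m : ℕ} (A : Fin m → Matrix (Fin n1) (Fin n2) ℝ)
    (y : EuclideanSpace ℝ (Fin m)) (v0 : EuclideanSpace ℝ (Fin n2))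
    (u : ℕ → EuclideanSpace ℝ (Fin n1)) (v : ℕ → EuclideanSpace ℝ (Fin n2))
    (uh : ℕ → EuclideanSpace ℝ (Fin n1)) (vh : ℕ → EuclideanSpace ℝ (Fin n2)) : Prop :=
  v 0 = v0 ∧
  ∀ t : ℕ,
    (∀ u' : EuclideanSpace ℝ (Fin n1),
      ‖y - calA A (vecMulVec (ofE (uh t)) (ofE (v t)))‖ ≤
        ‖y - calA A (vecMulVec (ofE u') (ofE (v t)))‖) ∧
    u (t + 1) = ‖uh t‖⁻¹ • uh t ∧
    (∀ v' : EuclideanSpace ℝ (Fin n2),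
      ‖y - calA A (vecMulVec (ofE (u (t + 1))) (ofE (vh t)))‖ ≤
        ‖y - calA A (vecMulVec (ofE (u (t + 1))) (ofE v'))‖) ∧
    v (t + 1) = ‖vh t‖⁻¹ • vh t

/-- The orthogonal projection `𝒫_𝒪` onto the "off-diagonal blocks". -/
def POproj {n1 n2 : ℕ} (Z : Matrix (Fin n1) (Fin n2) ℝ) : Matrix (Fin n1) (Fin n2) ℝ :=
  vecMulVec (ofE (e1 n1)) (ofE (e1 n1)) * Z * (1 - vecMulVec (ofE (e1 n2)) (ofE (e1 n2)))
    + (1 - vecMulVec (ofE (e1 n1)) (ofE (e1 n1))) * Z * vecMulVec (ofE (e1 n2)) (ofE (e1 n2))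


section Aux

variable {n1 n2 m : ℕ}

lemma frobInner_comm (X Y : Matrix (Fin n1) (Fin n2) ℝ) : frobInner X Y = frobInner Y X :=
  Finset.sum_congr rfl fun i _ => Finset.sum_congr rfl fun j _ => mul_comm _ _

lemma frobInner_add_right (Z X Y : Matrix (Fin n1) (Fin n2) ℝ) :
    frobInner Z (X + Y) = frobInner Z X + frobInner Z Y := by
  unfold frobInner
  rw [← Finset.sum_add_distrib]
  refine Finset.sum_congr rfl fun i _ => ?_
  rw [← Finset.sum_add_distrib]
  exact Finset.sum_congr rfl fun j _ => by simp [Matrix.add_apply]; ring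

lemma frobInner_sub_right (Z X Y : Matrix (Fin n1) (Fin n2) ℝ) :
    frobInner Z (X - Y) = frobInner Z X - frobInner Z Y := by
  unfold frobInner
  rw [← Finset.sum_sub_distrib]
  refine Finset.sum_congr rfl fun i _ => ?_
  rw [← Finset.sum_sub_distrib]
  exact Finset.sum_congr rfl fun j _ => by simp [Matrix.sub_apply]; ring

lemma frobInner_zero_right (Z : Matrix (Fin n1) (Fin n2) ℝ) : frobInner Z 0 = 0 := by
  simp [frobInner]

lemma frobInner_smul_right (c : ℝ) (Z X : Matrix (Fin n1) (Fin n2) ℝ) :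
    frobInner Z (c • X) = c * frobInner Z X := by
  unfold frobInner
  rw [Finset.mul_sum]
  refine Finset.sum_congr rfl fun i _ => ?_
  rw [Finset.mul_sum]
  exact Finset.sum_congr rfl fun j _ => by simp [Matrix.smul_apply]; ring

lemma frobInner_smul_left (c : ℝ) (Z X : Matrix (Fin n1) (Fin n2) ℝ) :
    frobInner (c • X) Z = c * frobInner X Z := by
  rw [frobInner_comm, frobInner_smul_right, frobInner_comm]

lemma frobInner_sum_right {ι : Type*} (s : Finset ι) (f : ι → Matrix (Fin n1) (Fin n2) ℝ)
    (N : Matrix (Fin n1) (Fin n2) ℝ) :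
    frobInner N (∑ i ∈ s, f i) = ∑ i ∈ s, frobInner N (f i) := by
  classical
  induction s using Finset.induction with
  | empty => simp [frobInner_zero_right]
  | @insert a s h ih => rw [Finset.sum_insert h, Finset.sum_insert h, frobInner_add_right, ih]

lemma frobInner_self_nonneg (X : Matrix (Fin n1) (Fin n2) ℝ) : 0 ≤ frobInner X X :=
  Finset.sum_nonneg fun i _ => Finset.sum_nonneg fun j _ => mul_self_nonneg _

lemma frobNorm_nonneg (X : Matrix (Fin n1) (Fin n2) ℝ) : 0 ≤ frobNorm X :=
  Real.sqrt_nonneg _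

lemma frobNorm_sq (X : Matrix (Fin n1) (Fin n2) ℝ) : frobNorm X ^ 2 = frobInner X X :=
  Real.sq_sqrt (frobInner_self_nonneg X)

lemma eq_zero_of_frobNorm_eq_zero {X : Matrix (Fin n1) (Fin n2) ℝ} (h : frobNorm X = 0) :
    X = 0 := by
  have h0 : frobInner X X = 0 := by rw [← frobNorm_sq, h]; ring
  have h1 := (Finset.sum_eq_zero_iff_of_nonneg
    (fun i _ => Finset.sum_nonneg (fun j _ => mul_self_nonneg (X i j)))).1 h0
  ext i j
  have h2 := (Finset.sum_eq_zero_iff_of_nonneg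
    (fun j _ => mul_self_nonneg (X i j))).1 (h1 i (Finset.mem_univ i)) j (Finset.mem_univ j)
  simpa [mul_self_eq_zero] using h2

lemma e1_ofE {n : ℕ} (i : Fin n) : ofE (e1 n) i = if (i : ℕ) = 0 then 1 else 0 := rfl

lemma P_mul_apply (Z : Matrix (Fin n1) (Fin n2) ℝ) (i : Fin n1) (j : Fin n2) :
    (vecMulVec (ofE (e1 n1)) (ofE (e1 n1)) * Z) i j = if (i : ℕ) = 0 then Z i j else 0 := by
  rw [Matrix.mul_apply]
  by_cases hi : (i : ℕ) = 0
  · rw [if_pos hi, Finset.sum_eq_single i]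
    · simp [vecMulVec_apply, e1_ofE, hi]
    · intro k _ hk
      have hk0 : ¬(k : ℕ) = 0 := fun h => hk (Fin.ext (h.trans hi.symm))
      simp [vecMulVec_apply, e1_ofE, hk0]
    · intro h; exact absurd (Finset.mem_univ i) h
  · rw [if_neg hi]
    exact Finset.sum_eq_zero fun k _ => by simp [vecMulVec_apply, e1_ofE, hi]

lemma mul_Q_apply (Z : Matrix (Fin n1) (Fin n2) ℝ) (i : Fin n1) (j : Fin n2) :
    (Z * vecMulVec (ofE (e1 n2)) (ofE (e1 n2))) i j = if (j : ℕ) = 0 then Z i j else 0 := by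
  rw [Matrix.mul_apply]
  by_cases hj : (j : ℕ) = 0
  · rw [if_pos hj, Finset.sum_eq_single j]
    · simp [vecMulVec_apply, e1_ofE, hj]
    · intro k _ hk
      have hk0 : ¬(k : ℕ) = 0 := fun h => hk (Fin.ext (h.trans hj.symm))
      simp [vecMulVec_apply, e1_ofE, hk0]
    · intro h; exact absurd (Finset.mem_univ j) h
  · rw [if_neg hj]
    exact Finset.sum_eq_zero fun k _ => by simp [vecMulVec_apply, e1_ofE, hj]

lemma POproj_apply (Z : Matrix (Fin n1) (Fin n2) ℝ) (i : Fin n1) (j : Fin n2) :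
    POproj Z i j = if ((i : ℕ) = 0 ↔ (j : ℕ) = 0) then 0 else Z i j := by
  unfold POproj
  simp only [Matrix.mul_sub, Matrix.sub_mul, Matrix.mul_one, Matrix.one_mul,
    Matrix.sub_apply, Matrix.add_apply]
  simp only [mul_Q_apply, P_mul_apply]
  by_cases hi : (i : ℕ) = 0 <;> by_cases hj : (j : ℕ) = 0 <;> simp [hi, hj]

lemma POproj_idem (Z : Matrix (Fin n1) (Fin n2) ℝ) : POproj (POproj Z) = POproj Z := by
  ext i j
  simp only [POproj_apply]
  split_ifs <;> rfl

lemma frobInner_POproj_left (X : Matrix (Fin n1) (Fin n2) ℝ) (Y : Matrix (Fin n1) (Fin n2) ℝ) :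
    frobInner (POproj X) Y = frobInner X (POproj Y) := by
  unfold frobInner
  refine Finset.sum_congr rfl fun i _ => Finset.sum_congr rfl fun j _ => ?_
  rw [POproj_apply, POproj_apply]
  split_ifs <;> ring

lemma frobInner_POproj_both (X Y : Matrix (Fin n1) (Fin n2) ℝ) :
    frobInner (POproj X) (POproj Y) = frobInner X (POproj Y) := by
  rw [frobInner_POproj_left, POproj_idem]

lemma frobNorm_POproj_le (Z : Matrix (Fin n1) (Fin n2) ℝ) : frobNorm (POproj Z) ≤ frobNorm Z := by
  apply Real.sqrt_le_sqrt
  refine Finset.sum_le_sum fun i _ => Finset.sum_le_sum fun j _ => ?_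
  rw [POproj_apply]
  split_ifs
  · simpa using mul_self_nonneg (Z i j)
  · exact le_refl _

lemma Omat_eq (X : Matrix (Fin n1) (Fin n2) ℝ) : Omat X = POproj X := rfl

-- Rank lemmas

lemma rank_le_of_range_le {X Y : Matrix (Fin n1) (Fin n2) ℝ}
    (h : LinearMap.range X.mulVecLin ≤ LinearMap.range Y.mulVecLin) : X.rank ≤ Y.rank :=
  Submodule.finrank_mono h

lemma rank_add_le' (X Y : Matrix (Fin n1) (Fin n2) ℝ) : (X + Y).rank ≤ X.rank + Y.rank := by
  have h : LinearMap.range (X + Y).mulVecLin ≤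
      LinearMap.range X.mulVecLin ⊔ LinearMap.range Y.mulVecLin := by
    rintro w hw
    obtain ⟨v, rfl⟩ := hw
    refine Submodule.mem_sup.2 ⟨X *ᵥ v, ⟨v, by simp [Matrix.mulVecLin_apply]⟩,
      Y *ᵥ v, ⟨v, by simp [Matrix.mulVecLin_apply]⟩, ?_⟩
    simp [Matrix.mulVecLin_apply, Matrix.add_mulVec]
  exact le_trans (Submodule.finrank_mono h)
    (Submodule.finrank_add_le_finrank_add_finrank _ _)

lemma rank_neg_le (Y : Matrix (Fin n1) (Fin n2) ℝ) : (-Y).rank ≤ Y.rank := by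
  apply rank_le_of_range_le
  rintro w hw
  obtain ⟨v, rfl⟩ := hw
  exact ⟨-v, by simp [Matrix.mulVecLin_apply, Matrix.neg_mulVec, Matrix.mulVec_neg]⟩

lemma rank_sub_le' (X Y : Matrix (Fin n1) (Fin n2) ℝ) : (X - Y).rank ≤ X.rank + Y.rank := by
  rw [sub_eq_add_neg]
  exact le_trans (rank_add_le' X (-Y)) (by have := rank_neg_le Y; omega)

lemma rank_smul_le (a : ℝ) (X : Matrix (Fin n1) (Fin n2) ℝ) : (a • X).rank ≤ X.rank := by
  apply rank_le_of_range_le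
  rintro w hw
  obtain ⟨v, rfl⟩ := hw
  exact ⟨a • v, by simp [Matrix.mulVecLin_apply, Matrix.smul_mulVec, Matrix.mulVec_smul]⟩

lemma rank_vecMulVec_le (x : Fin n1 → ℝ) (y : Fin n2 → ℝ) : (vecMulVec x y).rank ≤ 1 := by
  rw [vecMulVec_eq Unit]
  refine le_trans (Matrix.rank_mul_le_left _ _) (le_trans (Matrix.rank_le_card_width _) ?_)
  simp

lemma rank_POproj_le {Z : Matrix (Fin n1) (Fin n2) ℝ} (hZ : Z.rank ≤ 1) :
    (POproj Z).rank ≤ 2 := by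
  unfold POproj
  refine le_trans (rank_add_le' _ _) ?_
  have h1 : (vecMulVec (ofE (e1 n1)) (ofE (e1 n1)) * Z *
      (1 - vecMulVec (ofE (e1 n2)) (ofE (e1 n2)))).rank ≤ 1 :=
    le_trans (Matrix.rank_mul_le_left _ _) (le_trans (Matrix.rank_mul_le_right _ _) hZ)
  have h2 : ((1 - vecMulVec (ofE (e1 n1)) (ofE (e1 n1))) * Z *
      vecMulVec (ofE (e1 n2)) (ofE (e1 n2))).rank ≤ 1 :=
    le_trans (Matrix.rank_mul_le_left _ _) (le_trans (Matrix.rank_mul_le_right _ _) hZ)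
  omega

-- calA and the bilinear form qA

lemma calA_ofE (A : Fin m → Matrix (Fin n1) (Fin n2) ℝ) (X : Matrix (Fin n1) (Fin n2) ℝ)
    (i : Fin m) : ofE (calA A X) i = (Real.sqrt m)⁻¹ * frobInner (A i) X := rfl

/-- The bilinear form `⟪𝒜X, 𝒜Y⟫` written as a plain sum. -/
def qA (A : Fin m → Matrix (Fin n1) (Fin n2) ℝ) (X Y : Matrix (Fin n1) (Fin n2) ℝ) : ℝ :=
  ∑ i, ofE (calA A X) i * ofE (calA A Y) i

lemma norm_calA_sq (A : Fin m → Matrix (Fin n1) (Fin n2) ℝ) (X : Matrix (Fin n1) (Fin n2) ℝ) :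
    ‖calA A X‖ ^ 2 = qA A X X := by
  rw [EuclideanSpace.norm_eq, Real.sq_sqrt (Finset.sum_nonneg fun i _ => sq_nonneg _)]
  exact Finset.sum_congr rfl fun i _ => by
    show ‖ofE (calA A X) i‖ ^ 2 = _
    rw [Real.norm_eq_abs, sq_abs, sq]

lemma qA_smul_left (A : Fin m → Matrix (Fin n1) (Fin n2) ℝ) (c : ℝ)
    (X Y : Matrix (Fin n1) (Fin n2) ℝ) : qA A (c • X) Y = c * qA A X Y := by
  unfold qA
  rw [Finset.mul_sum]
  refine Finset.sum_congr rfl fun i _ => ?_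
  simp only [calA_ofE, frobInner_smul_right]
  ring

lemma qA_smul_right (A : Fin m → Matrix (Fin n1) (Fin n2) ℝ) (c : ℝ)
    (X Y : Matrix (Fin n1) (Fin n2) ℝ) : qA A X (c • Y) = c * qA A X Y := by
  unfold qA
  rw [Finset.mul_sum]
  refine Finset.sum_congr rfl fun i _ => ?_
  simp only [calA_ofE, frobInner_smul_right]
  ring

lemma qA_polar (A : Fin m → Matrix (Fin n1) (Fin n2) ℝ) (X Y : Matrix (Fin n1) (Fin n2) ℝ) :
    qA A (X + Y) (X + Y) - qA A (X - Y) (X - Y) = 4 * qA A X Y := by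
  unfold qA
  rw [← Finset.sum_sub_distrib, Finset.mul_sum]
  refine Finset.sum_congr rfl fun i _ => ?_
  simp only [calA_ofE, frobInner_add_right, frobInner_sub_right]
  ring

lemma frob_polar (X Y : Matrix (Fin n1) (Fin n2) ℝ) :
    frobInner (X + Y) (X + Y) - frobInner (X - Y) (X - Y) = 4 * frobInner X Y := by
  unfold frobInner
  rw [← Finset.sum_sub_distrib, Finset.mul_sum]
  refine Finset.sum_congr rfl fun i _ => ?_
  rw [← Finset.sum_sub_distrib, Finset.mul_sum]
  refine Finset.sum_congr rfl fun j _ => ?_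
  simp only [Matrix.add_apply, Matrix.sub_apply]
  ring

lemma frob_parallelogram (X Y : Matrix (Fin n1) (Fin n2) ℝ) :
    frobInner (X + Y) (X + Y) + frobInner (X - Y) (X - Y) =
      2 * frobInner X X + 2 * frobInner Y Y := by
  unfold frobInner
  rw [← Finset.sum_add_distrib, Finset.mul_sum, Finset.mul_sum, ← Finset.sum_add_distrib]
  refine Finset.sum_congr rfl fun i _ => ?_
  rw [← Finset.sum_add_distrib, Finset.mul_sum, Finset.mul_sum, ← Finset.sum_add_distrib]
  refine Finset.sum_congr rfl fun j _ => ?_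
  simp only [Matrix.add_apply, Matrix.sub_apply]
  ring

lemma rip_quad {A : Fin m → Matrix (Fin n1) (Fin n2) ℝ} {δ : ℝ} (hRIP : HasRIP A δ)
    {Z : Matrix (Fin n1) (Fin n2) ℝ} (hZ : Z.rank ≤ 4) :
    |qA A Z Z - frobInner Z Z| ≤ δ * frobInner Z Z := by
  obtain ⟨h1, h2⟩ := hRIP Z hZ
  have e1 : ‖calA A Z‖ ^ 2 = qA A Z Z := norm_calA_sq A Z
  have e2 : frobNorm Z ^ 2 = frobInner Z Z := frobNorm_sq Z
  rw [e1, e2] at h1 h2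
  rw [abs_le]
  constructor <;> linarith

lemma rip_pair {A : Fin m → Matrix (Fin n1) (Fin n2) ℝ} {δ : ℝ} (hRIP : HasRIP A δ)
    {X Y : Matrix (Fin n1) (Fin n2) ℝ} (hX : X.rank ≤ 2) (hY : Y.rank ≤ 2) :
    |qA A X Y - frobInner X Y| ≤ δ / 2 * (frobInner X X + frobInner Y Y) := by
  have hp : (X + Y).rank ≤ 4 := le_trans (rank_add_le' X Y) (by omega)
  have hm : (X - Y).rank ≤ 4 := le_trans (rank_sub_le' X Y) (by omega)
  have h1 := rip_quad hRIP hp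
  have h2 := rip_quad hRIP hm
  have e1 := qA_polar A X Y
  have e2 := frob_polar X Y
  have e3 := frob_parallelogram X Y
  have e4 : δ * (frobInner (X + Y) (X + Y) + frobInner (X - Y) (X - Y)) =
      δ * (2 * frobInner X X + 2 * frobInner Y Y) := by rw [e3]
  rw [abs_le] at h1 h2 ⊢
  constructor <;> linarith [h1.1, h1.2, h2.1, h2.2]

lemma calA_zero (A : Fin m → Matrix (Fin n1) (Fin n2) ℝ) (i : Fin m) :
    ofE (calA A 0) i = 0 := by
  rw [calA_ofE, frobInner_zero_right, mul_zero]

lemma rip_pair' {A : Fin m → Matrix (Fin n1) (Fin n2) ℝ} {δ : ℝ} (hRIP : HasRIP A δ)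
    {X Y : Matrix (Fin n1) (Fin n2) ℝ} (hX : X.rank ≤ 2) (hY : Y.rank ≤ 2) (hδ : 0 < δ) :
    |qA A X Y - frobInner X Y| ≤ δ * (frobNorm X * frobNorm Y) := by
  by_cases hX0 : frobNorm X = 0
  · have hX' : X = 0 := eq_zero_of_frobNorm_eq_zero hX0
    subst hX'
    have hq : qA A 0 Y = 0 := by
      unfold qA; exact Finset.sum_eq_zero fun i _ => by rw [calA_zero, zero_mul]
    have hf : frobInner (0 : Matrix (Fin n1) (Fin n2) ℝ) Y = 0 := by
      rw [frobInner_comm]; exact frobInner_zero_right Y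
    rw [hq, hf, hX0]
    simp
  by_cases hY0 : frobNorm Y = 0
  · have hY' : Y = 0 := eq_zero_of_frobNorm_eq_zero hY0
    subst hY'
    have hq : qA A X 0 = 0 := by
      unfold qA; exact Finset.sum_eq_zero fun i _ => by rw [calA_zero, mul_zero]
    rw [hq, frobInner_zero_right, hY0]
    simp
  have hx : 0 < frobNorm X := lt_of_le_of_ne (frobNorm_nonneg X) (Ne.symm hX0)
  have hy : 0 < frobNorm Y := lt_of_le_of_ne (frobNorm_nonneg Y) (Ne.symm hY0)
  obtain ⟨a, ha, ha2⟩ : ∃ a : ℝ, 0 < a ∧ a * a = frobNorm Y / frobNorm X :=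
    ⟨Real.sqrt (frobNorm Y / frobNorm X), Real.sqrt_pos.2 (div_pos hy hx),
      Real.mul_self_sqrt (le_of_lt (div_pos hy hx))⟩
  have hb2 : a⁻¹ * a⁻¹ = frobNorm X / frobNorm Y := by
    rw [← mul_inv, ha2, inv_div]
  have hab : a * a⁻¹ = 1 := mul_inv_cancel₀ (ne_of_gt ha)
  have h := rip_pair hRIP (le_trans (rank_smul_le a X) hX) (le_trans (rank_smul_le a⁻¹ Y) hY)
  rw [qA_smul_left, qA_smul_right, frobInner_smul_left, frobInner_smul_right,
    frobInner_smul_left, frobInner_smul_right, frobInner_smul_left, frobInner_smul_right] at h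
  have hfx : frobInner X X = frobNorm X * frobNorm X := by rw [← frobNorm_sq]; ring
  have hfy : frobInner Y Y = frobNorm Y * frobNorm Y := by rw [← frobNorm_sq]; ring
  have key1 : a * (a⁻¹ * qA A X Y) = qA A X Y := by
    rw [← mul_assoc, hab, one_mul]
  have key2 : a * (a⁻¹ * frobInner X Y) = frobInner X Y := by
    rw [← mul_assoc, hab, one_mul]
  rw [key1, key2, hfx, hfy] at h
  have harith : δ / 2 * (a * (a * (frobNorm X * frobNorm X)) +
      a⁻¹ * (a⁻¹ * (frobNorm Y * frobNorm Y))) = δ * (frobNorm X * frobNorm Y) := by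
    have e1 : a * (a * (frobNorm X * frobNorm X)) = frobNorm X * frobNorm Y := by
      have : a * (a * (frobNorm X * frobNorm X)) = (a * a) * (frobNorm X * frobNorm X) := by ring
      rw [this, ha2]; field_simp
    have e2 : a⁻¹ * (a⁻¹ * (frobNorm Y * frobNorm Y)) = frobNorm X * frobNorm Y := by
      have : a⁻¹ * (a⁻¹ * (frobNorm Y * frobNorm Y)) = (a⁻¹ * a⁻¹) * (frobNorm Y * frobNorm Y) := by
        ring
      rw [this, hb2]; field_simp
    rw [e1, e2]; ring
  rw [harith] at h
  exact h

lemma calA_Omat_ofE (A : Fin m → Matrix (Fin n1) (Fin n2) ℝ) (X : Matrix (Fin n1) (Fin n2) ℝ)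
    (i : Fin m) :
    ofE (calA (fun i => Omat (A i)) X) i = ofE (calA A (POproj X)) i := by
  rw [calA_ofE, calA_ofE]
  show (Real.sqrt m)⁻¹ * frobInner (Omat (A i)) X = _
  rw [Omat_eq, frobInner_POproj_left]

lemma frobInner_B (A : Fin m → Matrix (Fin n1) (Fin n2) ℝ)
    (M N : Matrix (Fin n1) (Fin n2) ℝ) :
    frobInner N (calAdj (fun i => Omat (A i)) (calA (fun i => Omat (A i)) M) - POproj M)
      = qA A (POproj N) (POproj M) - frobInner (POproj N) (POproj M) := by
  rw [frobInner_sub_right]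
  have hterm2 : frobInner N (POproj M) = frobInner (POproj N) (POproj M) :=
    (frobInner_POproj_both N M).symm
  have hterm1 : frobInner N (calAdj (fun i => Omat (A i)) (calA (fun i => Omat (A i)) M))
      = qA A (POproj N) (POproj M) := by
    unfold calAdj
    rw [frobInner_sum_right]
    unfold qA
    refine Finset.sum_congr rfl fun i _ => ?_
    rw [frobInner_smul_right]
    have h1 : ofE (calA (fun i => Omat (A i)) M) i = ofE (calA A (POproj M)) i :=
      calA_Omat_ofE A M i
    have h2 : frobInner N (Omat (A i)) = frobInner (A i) (POproj N) := by
      rw [frobInner_comm, Omat_eq, frobInner_POproj_left]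
    rw [h1, h2, calA_ofE, calA_ofE]
    ring
  rw [hterm1, hterm2]

lemma frobInner_vecMulVec_left (a : Fin n1 → ℝ) (b : Fin n2 → ℝ)
    (C : Matrix (Fin n1) (Fin n2) ℝ) :
    frobInner (vecMulVec a b) C = ∑ i, a i * (C *ᵥ b) i := by
  unfold frobInner
  refine Finset.sum_congr rfl fun i _ => ?_
  rw [Matrix.mulVec, dotProduct, Finset.mul_sum]
  exact Finset.sum_congr rfl fun j _ => by rw [vecMulVec_apply]; ring

lemma frobNorm_vecMulVec (a : Fin n1 → ℝ) (b : Fin n2 → ℝ) :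
    frobNorm (vecMulVec a b) = Real.sqrt (∑ i, a i * a i) * Real.sqrt (∑ j, b j * b j) := by
  unfold frobNorm
  rw [← Real.sqrt_mul (Finset.sum_nonneg fun i _ => mul_self_nonneg _)]
  congr 1
  rw [Finset.sum_mul_sum]
  unfold frobInner
  refine Finset.sum_congr rfl fun i _ => Finset.sum_congr rfl fun j _ => ?_
  rw [vecMulVec_apply]
  ring

end Aux


lemma key_bound {A : Fin m → Matrix (Fin n1) (Fin n2) ℝ} {δ : ℝ} (hRIP : HasRIP A δ)
    (hδ0 : 0 < δ) (M : Matrix (Fin n1) (Fin n2) ℝ) (hM : M.rank ≤ 1)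
    (x : Fin n1 → ℝ) (y : Fin n2 → ℝ) :
    frobInner (vecMulVec x y)
        (calAdj (fun i => Omat (A i)) (calA (fun i => Omat (A i)) M) - POproj M)
      ≤ δ * frobNorm M * (Real.sqrt (∑ i, x i * x i) * Real.sqrt (∑ j, y j * y j)) := by
  have hPN : (POproj (vecMulVec x y)).rank ≤ 2 := rank_POproj_le (rank_vecMulVec_le _ _)
  have hPM : (POproj M).rank ≤ 2 := rank_POproj_le hM
  have h := rip_pair' hRIP hPN hPM hδ0
  have hid := frobInner_B A M (vecMulVec x y)
  have h1 : frobNorm (POproj (vecMulVec x y)) ≤ frobNorm (vecMulVec x y) :=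
    frobNorm_POproj_le _
  have h2 : frobNorm (POproj M) ≤ frobNorm M := frobNorm_POproj_le _
  have h3 : frobNorm (vecMulVec x y)
      = Real.sqrt (∑ i, x i * x i) * Real.sqrt (∑ j, y j * y j) := frobNorm_vecMulVec x y
  have hmul : frobNorm (POproj (vecMulVec x y)) * frobNorm (POproj M)
      ≤ frobNorm (vecMulVec x y) * frobNorm M :=
    mul_le_mul h1 h2 (frobNorm_nonneg _) (frobNorm_nonneg _)
  calc frobInner (vecMulVec x y)
        (calAdj (fun i => Omat (A i)) (calA (fun i => Omat (A i)) M) - POproj M)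
      = qA A (POproj (vecMulVec x y)) (POproj M)
          - frobInner (POproj (vecMulVec x y)) (POproj M) := hid
    _ ≤ δ * (frobNorm (POproj (vecMulVec x y)) * frobNorm (POproj M)) :=
        le_trans (le_abs_self _) h
    _ ≤ δ * (frobNorm (vecMulVec x y) * frobNorm M) :=
        mul_le_mul_of_nonneg_left hmul hδ0.le
    _ = δ * frobNorm M * (Real.sqrt (∑ i, x i * x i) * Real.sqrt (∑ j, y j * y j)) := by
        rw [h3]; ring

/-- If `𝒜` satisfies the RIP with constant `δ ∈ (0,1)`, then for all `u, v` one has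
`‖(𝒪*𝒪 − 𝒫_𝒪)(uvᵀ)‖ ≤ δ‖uvᵀ‖_F` in the spectral norm. -/
theorem statement2 {n1 n2 m : ℕ} (A : Fin m → Matrix (Fin n1) (Fin n2) ℝ) (δ : ℝ)
    (hδ0 : 0 < δ) (hδ1 : δ < 1) (hRIP : HasRIP A δ)
    (u : EuclideanSpace ℝ (Fin n1)) (v : EuclideanSpace ℝ (Fin n2)) :
    specNorm (calAdj (fun i => Omat (A i))
        (calA (fun i => Omat (A i)) (vecMulVec (ofE u) (ofE v)))
      - POproj (vecMulVec (ofE u) (ofE v)))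
      ≤ δ * frobNorm (vecMulVec (ofE u) (ofE v)) := by
  have hM : (vecMulVec (ofE u) (ofE v)).rank ≤ 1 := rank_vecMulVec_le _ _
  have hC : 0 ≤ δ * frobNorm (vecMulVec (ofE u) (ofE v)) :=
    mul_nonneg hδ0.le (frobNorm_nonneg _)
  unfold specNorm
  refine ContinuousLinearMap.opNorm_le_bound _ hC fun w => ?_
  simp only [LinearMap.coe_toContinuousLinearMap']
  set B := calAdj (fun i => Omat (A i))
      (calA (fun i => Omat (A i)) (vecMulVec (ofE u) (ofE v)))
    - POproj (vecMulVec (ofE u) (ofE v)) with hBdef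
  have hTw : ‖Matrix.toEuclideanLin B w‖ = Real.sqrt (∑ i, (B *ᵥ ofE w) i * (B *ᵥ ofE w) i) := by
    rw [Matrix.toEuclideanLin_apply, EuclideanSpace.norm_eq]
    congr 1
    refine Finset.sum_congr rfl fun i _ => ?_
    show ‖(B *ᵥ ofE w) i‖ ^ 2 = _
    rw [Real.norm_eq_abs, sq_abs, sq]
  have hw : ‖w‖ = Real.sqrt (∑ j, ofE w j * ofE w j) := by
    rw [EuclideanSpace.norm_eq]
    congr 1
    refine Finset.sum_congr rfl fun j _ => ?_
    show ‖ofE w j‖ ^ 2 = _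
    rw [Real.norm_eq_abs, sq_abs, sq]
  have hsum : frobInner (vecMulVec (B *ᵥ ofE w) (ofE w)) B
      = ∑ i, (B *ᵥ ofE w) i * (B *ᵥ ofE w) i := frobInner_vecMulVec_left _ _ _
  have hb := key_bound hRIP hδ0 (vecMulVec (ofE u) (ofE v)) hM (B *ᵥ ofE w) (ofE w)
  rw [← hBdef] at hb
  rw [hsum] at hb
  set s := Real.sqrt (∑ i, (B *ᵥ ofE w) i * (B *ᵥ ofE w) i) with hsdef
  set t := Real.sqrt (∑ j, ofE w j * ofE w j) with htdef
  have hsnn : 0 ≤ s := Real.sqrt_nonneg _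
  have htnn : 0 ≤ t := Real.sqrt_nonneg _
  have hs2 : s ^ 2 = ∑ i, (B *ᵥ ofE w) i * (B *ᵥ ofE w) i :=
    Real.sq_sqrt (Finset.sum_nonneg fun i _ => mul_self_nonneg _)
  have hb' : s ^ 2 ≤ δ * frobNorm (vecMulVec (ofE u) (ofE v)) * (s * t) := by
    rw [hs2]; exact hb
  rw [hTw, hw]
  rcases eq_or_lt_of_le hsnn with hs0 | hspos
  · rw [← hs0]
    exact mul_nonneg hC htnn
  · nlinarith [hb', hspos]

end ALSPaper
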